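/- For unit quaternions a, b, c, the map F: S³×S³ → S³×S³ given by F(p,q) = (apc⁻¹, bqc⁻¹) preserves the almost complex structure J, i.e., J(dF(Z)) = dF(J(Z)) for every tangent vector Z, where dF(U,V) = (aUc⁻¹, bVc⁻¹). -/

import Mathlib

noncomputable section

/-- The almost complex structure `J` of the nearly Kähler `S³ × S³` at the point `(p, q)`. -/
def NKJ (p q : Quaternion ℝ) (Z : Quaternion ℝ × Quaternion ℝ) :
    Quaternion ℝ × Quaternion ℝ :=
  ((Real.sqrt 3)⁻¹ • ((2 : ℝ) • (p * q⁻¹ * Z.2) - Z.1),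
   (Real.sqrt 3)⁻¹ • (-((2 : ℝ) • (q * p⁻¹ * Z.1)) + Z.2))

/-- The differential of `F(p,q) = (apc⁻¹, bqc⁻¹)`. -/
def dF (a b c : Quaternion ℝ) (Z : Quaternion ℝ × Quaternion ℝ) :
    Quaternion ℝ × Quaternion ℝ :=
  (a * Z.1 * c⁻¹, b * Z.2 * c⁻¹)

/-- `F(p,q) = (apc⁻¹, bqc⁻¹)` preserves the almost complex structure:
`J(dF(Z)) = dF(J(Z))`, where `dF(U,V) = (aUc⁻¹, bVc⁻¹)` and on the left `J` is taken at
the image point `(apc⁻¹, bqc⁻¹)`. -/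
theorem NK_F_preserves_J (a b c : Quaternion ℝ) (ha : ‖a‖ = 1) (hb : ‖b‖ = 1) (hc : ‖c‖ = 1)
    (p q : Quaternion ℝ) (hp : ‖p‖ = 1) (hq : ‖q‖ = 1)
    (Z : Quaternion ℝ × Quaternion ℝ)
    (hZ : (inner ℝ Z.1 p : ℝ) = 0 ∧ (inner ℝ Z.2 q : ℝ) = 0) :
    NKJ (a * p * c⁻¹) (b * q * c⁻¹) (dF a b c Z) = dF a b c (NKJ p q Z) := by
  have ha0 : a ≠ 0 := by simp [← norm_ne_zero_iff, ha]
  have hb0 : b ≠ 0 := by simp [← norm_ne_zero_iff, hb]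
  have hc0 : c ≠ 0 := by simp [← norm_ne_zero_iff, hc]
  have hp0 : p ≠ 0 := by simp [← norm_ne_zero_iff, hp]
  have hq0 : q ≠ 0 := by simp [← norm_ne_zero_iff, hq]
  have k1 : (a * p * c⁻¹) * (b * q * c⁻¹)⁻¹ * (b * Z.2 * c⁻¹) = a * (p * q⁻¹ * Z.2) * c⁻¹ := by
    simp [mul_inv_rev, inv_inv, mul_assoc, inv_mul_cancel₀, mul_inv_cancel₀, ha0, hb0, hc0, hq0]
  have k2 : (b * q * c⁻¹) * (a * p * c⁻¹)⁻¹ * (a * Z.1 * c⁻¹) = b * (q * p⁻¹ * Z.1) * c⁻¹ := by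
    simp [mul_inv_rev, inv_inv, mul_assoc, inv_mul_cancel₀, mul_inv_cancel₀, ha0, hb0, hc0, hp0]
  simp only [NKJ, dF, k1, k2]
  refine Prod.ext ?_ ?_ <;>
  · simp only [smul_sub, smul_add, smul_neg, mul_smul_comm, smul_mul_assoc,
      mul_sub, sub_mul, mul_add, add_mul, neg_mul, mul_neg, mul_assoc]
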